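/- As σ → 1/2⁺, the sum over primes ∑_p p^{-2σ} is asymptotic to log(1/(2σ-1)); that is, the limit as σ → 1/2⁺ of (∑_p p^{-2σ}) / log(1/(2σ-1)) equals 1. -/

import Mathlib

open Filter Topology Real

noncomputable def zHom (s : ℝ) (hs : s ≠ 0) : ℕ →*₀ ℝ where
  toFun n := (n : ℝ) ^ (-s)
  map_zero' := by simp [Real.zero_rpow (neg_ne_zero.mpr hs)]
  map_one' := by simp
  map_mul' m n := by
    push_cast
    exact Real.mul_rpow (Nat.cast_nonneg m) (Nat.cast_nonneg n)

lemma zsummable {s : ℝ} (hs : 1 < s) (hs0 : s ≠ 0) :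
    Summable (fun n : ℕ ↦ ‖zHom s hs0 n‖) := by
  have : Summable (fun n : ℕ ↦ (n : ℝ) ^ (-s)) :=
    Real.summable_nat_rpow.mpr (by linarith)
  exact this.abs.congr fun n ↦ (Real.norm_eq_abs _).symm

lemma logZ_hasSum {s : ℝ} (hs : 1 < s) :
    HasSum (fun p : Nat.Primes ↦ -Real.log (1 - (p : ℝ) ^ (-s)))
      (Real.log (∑' n : ℕ, (n : ℝ) ^ (-s))) := by
  have hs0 : s ≠ 0 := by linarith
  have hP := EulerProduct.eulerProduct_completely_multiplicative_hasProd (zsummable hs hs0)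
  have hZpos : 0 < ∑' n : ℕ, zHom s hs0 n := by
    have hsum : Summable (fun n : ℕ ↦ zHom s hs0 n) := (zsummable hs hs0).of_norm
    have h1 : (1:ℝ) ≤ ∑' n : ℕ, zHom s hs0 n := by
      have := Summable.le_tsum hsum 1 (fun j _ ↦ Real.rpow_nonneg (Nat.cast_nonneg j) _)
      simpa [zHom] using this
    linarith
  have hterm : ∀ p : Nat.Primes, 0 < 1 - zHom s hs0 p := by
    intro p
    have hple : (zHom s hs0 p : ℝ) ≤ (p : ℝ)⁻¹ := by
      have h1p : (1:ℝ) ≤ (p:ℕ) := by exact_mod_cast p.prop.one_le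
      have := Real.rpow_le_rpow_of_exponent_le h1p (show -s ≤ -1 by linarith)
      simpa [zHom, Real.rpow_neg_one] using this
    have : (p:ℝ)⁻¹ ≤ 2⁻¹ := by
      have : (2:ℝ) ≤ (p:ℕ) := by exact_mod_cast p.prop.two_le
      exact inv_anti₀ (by norm_num) this
    linarith
  have hcont := (Real.continuousAt_log hZpos.ne').tendsto.comp hP
  have : HasSum (fun p : Nat.Primes ↦ Real.log ((1 - zHom s hs0 p)⁻¹))
      (Real.log (∑' n : ℕ, zHom s hs0 n)) := by
    refine hcont.congr fun A ↦ ?_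
    rw [Function.comp_apply, Real.log_prod]
    exact fun p _ ↦ (inv_pos.mpr (hterm p)).ne'
  simpa only [Real.log_inv, zHom, MonoidWithZeroHom.coe_mk, ZeroHom.coe_mk] using this

lemma prime_rpow_bounds {s : ℝ} (hs : 1 < s) (p : Nat.Primes) :
    0 < (p : ℝ) ^ (-s) ∧ (p : ℝ) ^ (-s) ≤ (p : ℝ)⁻¹ ∧ (p : ℝ)⁻¹ ≤ 2⁻¹ := by
  have hp0 : (0:ℝ) < (p:ℕ) := by exact_mod_cast p.prop.pos
  refine ⟨Real.rpow_pos_of_pos hp0 _, ?_, ?_⟩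
  · have h1p : (1:ℝ) ≤ (p:ℕ) := by exact_mod_cast p.prop.one_le
    have := Real.rpow_le_rpow_of_exponent_le h1p (show -s ≤ -1 by linarith)
    simpa [Real.rpow_neg_one] using this
  · have : (2:ℝ) ≤ (p:ℕ) := by exact_mod_cast p.prop.two_le
    exact inv_anti₀ (by norm_num) this

lemma diff_bound {s : ℝ} (hs : 1 < s) :
    |Real.log (∑' n : ℕ, (n : ℝ) ^ (-s)) - ∑' p : Nat.Primes, (p : ℝ) ^ (-s)|
      ≤ 2 * ∑' p : Nat.Primes, (p : ℝ) ^ (-2 : ℝ) := by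
  have hPs : Summable (fun p : Nat.Primes ↦ (p : ℝ) ^ (-s)) :=
    Nat.Primes.summable_rpow.mpr (by linarith)
  have hg : HasSum (fun p : Nat.Primes ↦ -Real.log (1 - (p : ℝ) ^ (-s)) - (p : ℝ) ^ (-s))
      (Real.log (∑' n : ℕ, (n : ℝ) ^ (-s)) - ∑' p : Nat.Primes, (p : ℝ) ^ (-s)) :=
    (logZ_hasSum hs).sub hPs.hasSum
  have hC : Summable (fun p : Nat.Primes ↦ 2 * (p : ℝ) ^ (-2 : ℝ)) :=
    (Nat.Primes.summable_rpow.mpr (by norm_num)).mul_left 2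
  have hnn : ∀ p : Nat.Primes, 0 ≤ -Real.log (1 - (p : ℝ) ^ (-s)) - (p : ℝ) ^ (-s) := by
    intro p
    obtain ⟨hx0, hx1, hx2⟩ := prime_rpow_bounds hs p
    have h1x : 0 < 1 - (p : ℝ) ^ (-s) := by linarith
    have := Real.log_le_sub_one_of_pos h1x
    linarith
  have hub : ∀ p : Nat.Primes,
      -Real.log (1 - (p : ℝ) ^ (-s)) - (p : ℝ) ^ (-s) ≤ 2 * (p : ℝ) ^ (-2 : ℝ) := by
    intro p
    obtain ⟨hx0, hx1, hx2⟩ := prime_rpow_bounds hs p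
    set x := (p : ℝ) ^ (-s) with hxdef
    have hxhalf : x ≤ 2⁻¹ := hx1.trans hx2
    have habs : |x| < 1 := by rw [abs_of_pos hx0]; linarith
    have hkey := Real.abs_log_sub_add_sum_range_le habs 1
    simp only [Finset.range_one, Finset.sum_singleton, pow_one] at hkey
    rw [abs_of_pos hx0] at hkey
    have h1x : (1:ℝ)/2 ≤ 1 - x := by linarith
    have hx2le : x ^ 2 / (1 - x) ≤ 2 * x ^ 2 := by
      rw [div_le_iff₀ (by linarith)]
      nlinarith [sq_nonneg x]
    have hxp2 : x ^ 2 ≤ (p : ℝ) ^ (-2 : ℝ) := by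
      have hp0 : (0:ℝ) < (p:ℕ) := by exact_mod_cast p.prop.pos
      have : (p : ℝ) ^ (-2 : ℝ) = ((p:ℝ)⁻¹) ^ 2 := by
        rw [← Real.rpow_natCast ((p:ℝ)⁻¹) 2, ← Real.rpow_neg_one (p:ℝ),
          ← Real.rpow_mul hp0.le]
        norm_num
      rw [this]
      exact pow_le_pow_left₀ hx0.le hx1 2
    have : -Real.log (1 - x) - x ≤ x ^ 2 / (1 - x) := by
      have := neg_abs_le (x / 1 + Real.log (1 - x))
      have h := (abs_le.mp hkey).2
      simp only [div_one] at this
      nlinarith [hkey, abs_le.mp hkey]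
    nlinarith
  have h1 : Real.log (∑' n : ℕ, (n : ℝ) ^ (-s)) - ∑' p : Nat.Primes, (p : ℝ) ^ (-s)
      ≤ 2 * ∑' p : Nat.Primes, (p : ℝ) ^ (-2 : ℝ) := by
    calc Real.log (∑' n : ℕ, (n : ℝ) ^ (-s)) - ∑' p : Nat.Primes, (p : ℝ) ^ (-s)
        ≤ ∑' p : Nat.Primes, 2 * (p : ℝ) ^ (-2 : ℝ) := hasSum_le hub hg hC.hasSum
      _ = 2 * ∑' p : Nat.Primes, (p : ℝ) ^ (-2 : ℝ) := tsum_mul_left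
  have h2 : 0 ≤ Real.log (∑' n : ℕ, (n : ℝ) ^ (-s)) - ∑' p : Nat.Primes, (p : ℝ) ^ (-s) :=
    hasSum_le hnn hasSum_zero hg
  rw [abs_of_nonneg h2]
  exact h1

lemma Zre {s : ℝ} (hs : 1 < s) :
    ((∑' n : ℕ, (n : ℝ) ^ (-s) : ℝ) : ℂ) = riemannZeta s := by
  rw [zeta_eq_tsum_one_div_nat_cpow (by simpa using hs), Complex.ofReal_tsum]
  congr 1 with n
  rw [Real.rpow_neg (Nat.cast_nonneg n), ← one_div, Complex.ofReal_div, Complex.ofReal_one,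
    Complex.ofReal_cpow (Nat.cast_nonneg n)]
  norm_num

lemma Zmul_tendsto :
    Tendsto (fun s : ℝ ↦ (∑' n : ℕ, (n : ℝ) ^ (-s)) * (s - 1)) (𝓝[>] (1:ℝ)) (𝓝 1) := by
  have hγ := ZetaAsymptotics.tendsto_riemannZeta_sub_one_div_nhds_right
  have hre : Tendsto (fun s : ℝ ↦ (∑' n : ℕ, (n : ℝ) ^ (-s)) - 1 / (s - 1)) (𝓝[>] (1:ℝ))
      (𝓝 (Real.eulerMascheroniConstant)) := by
    have h0 := (Complex.continuous_re.tendsto _).comp hγ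
    simp only [Function.comp_apply, Complex.ofReal_re] at h0
    refine Filter.Tendsto.congr' ?_ h0
    filter_upwards [self_mem_nhdsWithin] with s hs
    simp only [Function.comp_apply]
    rw [← Zre hs]
    have h1 : ((1:ℂ)/(↑s-1)) = ((1/(s-1):ℝ):ℂ) := by push_cast; ring
    rw [h1, ← Complex.ofReal_sub, Complex.ofReal_re]
  have hsub : Tendsto (fun s : ℝ ↦ s - 1) (𝓝[>] (1:ℝ)) (𝓝 0) := by
    have : Tendsto (fun s : ℝ ↦ s - 1) (𝓝 (1:ℝ)) (𝓝 0) := by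
      simpa using (show Tendsto (fun s : ℝ ↦ s - 1) (𝓝 1) (𝓝 (1 - 1)) from (continuous_id.sub continuous_const).tendsto 1)
    exact this.mono_left nhdsWithin_le_nhds
  have hmain : Tendsto (fun s : ℝ ↦ (∑' n : ℕ, (n:ℝ)^(-s) - 1/(s-1)) * (s-1) + 1) (𝓝[>] (1:ℝ))
      (𝓝 (Real.eulerMascheroniConstant * 0 + 1)) := (hre.mul hsub).add tendsto_const_nhds
  simp only [mul_zero, zero_add] at hmain
  refine hmain.congr' ?_
  filter_upwards [self_mem_nhdsWithin] with s hs
  have hne : s - 1 ≠ 0 := by simp only [Set.mem_Ioi] at hs; intro h; linarith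
  field_simp
  ring

lemma key_tendsto :
    Tendsto (fun s : ℝ ↦ (∑' p : Nat.Primes, (p : ℝ) ^ (-s)) / Real.log (1 / (s - 1)))
      (𝓝[>] (1:ℝ)) (𝓝 1) := by
  set Z : ℝ → ℝ := fun s ↦ ∑' n : ℕ, (n : ℝ) ^ (-s) with hZdef
  set P : ℝ → ℝ := fun s ↦ ∑' p : Nat.Primes, (p : ℝ) ^ (-s) with hPdef
  set L : ℝ → ℝ := fun s ↦ Real.log (1 / (s - 1)) with hLdef
  set C : ℝ := 2 * ∑' p : Nat.Primes, (p : ℝ) ^ (-2 : ℝ) with hCdef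
  -- L tends to infinity
  have hsub : Tendsto (fun s : ℝ ↦ s - 1) (𝓝[>] (1:ℝ)) (𝓝[>] (0:ℝ)) := by
    refine tendsto_nhdsWithin_of_tendsto_nhds_of_eventually_within _ ?_ ?_
    · have : Tendsto (fun s : ℝ ↦ s - 1) (𝓝 (1:ℝ)) (𝓝 0) := by
        simpa using (show Tendsto (fun s : ℝ ↦ s - 1) (𝓝 1) (𝓝 (1 - 1)) from (continuous_id.sub continuous_const).tendsto 1)
      exact this.mono_left nhdsWithin_le_nhds
    · filter_upwards [self_mem_nhdsWithin] with s hs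
      simp only [Set.mem_Ioi] at hs ⊢
      linarith
  have hL : Tendsto L (𝓝[>] (1:ℝ)) atTop := by
    have h1 : Tendsto (fun s : ℝ ↦ 1 / (s - 1)) (𝓝[>] (1:ℝ)) atTop := by
      simpa only [one_div, Function.comp_def] using tendsto_inv_nhdsGT_zero.comp hsub
    exact Real.tendsto_log_atTop.comp h1
  -- log of the product tends to 0
  have hlog0 : Tendsto (fun s : ℝ ↦ Real.log (Z s * (s - 1))) (𝓝[>] (1:ℝ)) (𝓝 0) := by
    have := (Real.continuousAt_log one_ne_zero).tendsto.comp Zmul_tendsto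
    rw [Real.log_one] at this; exact this
  -- pointwise: for s > 1, log (Z s) = L s + log (Z s * (s-1))
  have hZpos : ∀ s : ℝ, 1 < s → 0 < Z s := by
    intro s hs
    have hsum : Summable (fun n : ℕ ↦ (n : ℝ) ^ (-s)) := Real.summable_nat_rpow.mpr (by linarith)
    have h1 : (1:ℝ) ≤ Z s := by
      have := Summable.le_tsum hsum 1 (fun j _ ↦ Real.rpow_nonneg (Nat.cast_nonneg j) _)
      simpa using this
    linarith
  have hlogZ : ∀ᶠ s in 𝓝[>] (1:ℝ), Real.log (Z s) = L s + Real.log (Z s * (s - 1)) := by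
    filter_upwards [self_mem_nhdsWithin] with s hs
    simp only [Set.mem_Ioi] at hs
    have h1 : s - 1 ≠ 0 := by intro h; linarith
    rw [Real.log_mul (hZpos s hs).ne' h1]
    simp only [hLdef, one_div, Real.log_inv]
    ring
  -- |P s - L s| eventually bounded by C + 1
  have hbound : ∀ᶠ s in 𝓝[>] (1:ℝ), |P s - L s| ≤ C + 1 := by
    have h1 : ∀ᶠ s in 𝓝[>] (1:ℝ), |Real.log (Z s * (s - 1))| ≤ 1 := by
      filter_upwards [hlog0.eventually (eventually_abs_sub_lt 0 one_pos)] with s hs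
      simpa using hs.le
    filter_upwards [h1, hlogZ, self_mem_nhdsWithin] with s h1s h2s hs
    simp only [Set.mem_Ioi] at hs
    have hd := diff_bound hs
    have : P s - L s = (P s - Real.log (Z s)) + Real.log (Z s * (s - 1)) := by
      rw [h2s]; ring
    rw [this]
    calc |(P s - Real.log (Z s)) + Real.log (Z s * (s - 1))|
        ≤ |P s - Real.log (Z s)| + |Real.log (Z s * (s - 1))| := abs_add_le _ _
      _ ≤ C + 1 := by
          rw [abs_sub_comm]
          exact add_le_add hd h1s
  -- conclude
  have hne : ∀ᶠ s in 𝓝[>] (1:ℝ), 1 ≤ L s := hL.eventually_ge_atTop 1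
  have hquot : Tendsto (fun s : ℝ ↦ P s / L s - 1) (𝓝[>] (1:ℝ)) (𝓝 0) := by
    refine squeeze_zero_norm' ?_
      (Tendsto.div_atTop tendsto_const_nhds hL : Tendsto (fun s ↦ (C + 1) / L s) _ (𝓝 0))
    filter_upwards [hbound, hne] with s h1s h2s
    have hLpos : 0 < L s := by linarith
    rw [Real.norm_eq_abs, show P s / L s - 1 = (P s - L s) / L s by field_simp,
      abs_div, abs_of_pos hLpos]
    exact div_le_div_of_nonneg_right h1s hLpos.le
  have h := hquot.add (tendsto_const_nhds (x := (1:ℝ)))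
  rw [zero_add] at h
  exact h.congr fun s ↦ by ring

theorem stmt_1 :
    Filter.Tendsto
      (fun σ : ℝ => (∑' p : Nat.Primes, (p : ℝ) ^ (-(2 * σ))) / Real.log (1 / (2 * σ - 1)))
      (nhdsWithin (1/2) (Set.Ioi (1/2))) (nhds 1) := by
  have hσ : Tendsto (fun σ : ℝ ↦ 2 * σ) (𝓝[>] ((1:ℝ)/2)) (𝓝[>] (1:ℝ)) := by
    refine tendsto_nhdsWithin_of_tendsto_nhds_of_eventually_within _ ?_ ?_
    · have : Tendsto (fun σ : ℝ ↦ 2 * σ) (𝓝 ((1:ℝ)/2)) (𝓝 (2 * (1/2))) :=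
        (continuous_const.mul continuous_id).tendsto _
      rw [show (2:ℝ) * (1/2) = 1 by norm_num] at this
      exact this.mono_left nhdsWithin_le_nhds
    · filter_upwards [self_mem_nhdsWithin] with σ hσ
      simp only [Set.mem_Ioi] at hσ ⊢
      linarith
  exact key_tendsto.comp hσ
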